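/- Let μ > 0, let A ∈ ℝ^{m×n}, let C ∈ ℝ^{n×n} be symmetric positive semidefinite, set B = ACAᵀ and M(α) = μI_m + αB, let r̄ ∈ ℝ^m and δ > 0. Define S : (0,∞) → ℝ by S(α) = ¼·(r̄ᵀM(α)⁻¹r̄)² + δ·(α − 1)². If α* > 0 is a point where S'(α*) = 0 (in particular, if α* is a local minimizer of S in the open interval (0,∞)), then α* satisfies the fixed-point equation α* = 1 + (r̄ᵀM(α*)⁻¹r̄)·(r̄ᵀM(α*)⁻¹ B M(α*)⁻¹ r̄)/(4δ). -/

import Mathlib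

open Matrix Filter Topology

section Aux

variable {m : ℕ}

lemma aux_posdef_M (μ : ℝ) (hμ : 0 < μ) (B : Matrix (Fin m) (Fin m) ℝ)
    (hB : B.PosSemidef) (α : ℝ) (hα : 0 ≤ α) :
    (μ • (1 : Matrix (Fin m) (Fin m) ℝ) + α • B).PosDef := by
  have h1 : (μ • (1 : Matrix (Fin m) (Fin m) ℝ)).PosDef := by
    rw [Matrix.smul_one_eq_diagonal]
    exact Matrix.posDef_diagonal_iff.mpr fun _ => hμ
  refine h1.add_posSemidef ?_
  refine ⟨?_, fun x => ?_⟩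
  · rw [Matrix.IsHermitian, Matrix.conjTranspose_smul, star_trivial, hB.1.eq]
  · exact (hB.smul hα).2 x

end Aux

/-- **Theorem 3: optimal covariance correction factor.** With `B = ACAᵀ`,
`M(α) = μI + αB`, `S(α) = ¼(r̄ᵀM(α)⁻¹r̄)² + δ(α − 1)²`, any stationary point `α* > 0` of `S`
satisfies the fixed-point equation
`α* = 1 + (r̄ᵀM(α*)⁻¹r̄)(r̄ᵀM(α*)⁻¹BM(α*)⁻¹r̄)/(4δ)`. -/
theorem enkiMC_optimal_alpha_fixed_point {m n : ℕ} (μ : ℝ) (hμ : 0 < μ)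
    (A : Matrix (Fin m) (Fin n) ℝ) (C : Matrix (Fin n) (Fin n) ℝ) (hC : C.PosSemidef)
    (rbar : Fin m → ℝ) (δ : ℝ) (hδ : 0 < δ) :
    let B : Matrix (Fin m) (Fin m) ℝ := A * C * Aᵀ
    let M : ℝ → Matrix (Fin m) (Fin m) ℝ := fun α => μ • 1 + α • B
    let S : ℝ → ℝ := fun α =>
      (1 / 4) * (rbar ⬝ᵥ ((M α)⁻¹ *ᵥ rbar)) ^ 2 + δ * (α - 1) ^ 2
    ∀ αstar : ℝ, 0 < αstar → HasDerivAt S 0 αstar →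
      αstar = 1 + (rbar ⬝ᵥ ((M αstar)⁻¹ *ᵥ rbar)) *
        (rbar ⬝ᵥ ((M αstar)⁻¹ *ᵥ (B *ᵥ ((M αstar)⁻¹ *ᵥ rbar)))) / (4 * δ) := by
  intro B M S αstar hα hS
  have hB : B.PosSemidef := by
    have := hC.mul_mul_conjTranspose_same A
    rwa [A.conjTranspose_eq_transpose_of_trivial] at this
  -- M α is positive definite, hence invertible, for α ≥ 0
  have hMpd : ∀ α : ℝ, 0 ≤ α → (M α).PosDef := fun α hα' =>
    aux_posdef_M μ hμ B hB α hα'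
  have hMunit : ∀ α : ℝ, 0 ≤ α → IsUnit (M α).det := fun α hα' =>
    (hMpd α hα').det_pos.ne'.isUnit
  -- shorthand
  set f : ℝ → ℝ := fun α => rbar ⬝ᵥ ((M α)⁻¹ *ᵥ rbar) with hf
  set g : ℝ → ℝ := fun α => rbar ⬝ᵥ (((M α)⁻¹ * B * (M αstar)⁻¹) *ᵥ rbar) with hg
  -- resolvent identity
  have hres : ∀ α : ℝ, 0 ≤ α → f α - f αstar = (αstar - α) * g α := by
    intro α hα'
    have h1 : (M α) * (M α)⁻¹ = 1 := Matrix.mul_nonsing_inv _ (hMunit α hα')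
    have h2 : (M αstar)⁻¹ * (M αstar) = 1 := Matrix.nonsing_inv_mul _ (hMunit _ hα.le)
    have key : (M α)⁻¹ - (M αstar)⁻¹ = (αstar - α) • ((M α)⁻¹ * B * (M αstar)⁻¹) := by
      have h3 : (M α)⁻¹ * (M αstar - M α) * (M αstar)⁻¹ = (M α)⁻¹ - (M αstar)⁻¹ := by
        rw [Matrix.mul_sub, Matrix.sub_mul,
          Matrix.mul_nonsing_inv_cancel_right _ _ (hMunit _ hα.le),
          Matrix.nonsing_inv_mul _ (hMunit α hα'), Matrix.one_mul]
      have h4 : M αstar - M α = (αstar - α) • B := by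
        simp only [M]
        rw [sub_smul]
        abel
      rw [← h3, h4]
      rw [Matrix.mul_smul, Matrix.smul_mul]
    have : (M α)⁻¹ *ᵥ rbar - (M αstar)⁻¹ *ᵥ rbar
        = (αstar - α) • (((M α)⁻¹ * B * (M αstar)⁻¹) *ᵥ rbar) := by
      rw [← Matrix.sub_mulVec, key, Matrix.smul_mulVec]
    calc f α - f αstar = rbar ⬝ᵥ ((M α)⁻¹ *ᵥ rbar - (M αstar)⁻¹ *ᵥ rbar) := by
          rw [dotProduct_sub]
      _ = (αstar - α) * g α := by rw [this, dotProduct_smul, smul_eq_mul]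
  -- continuity of g at αstar
  have hMcont : ContinuousAt (fun α => (M α)⁻¹) αstar := by
    have hMc : Continuous M := by
      apply continuous_matrix
      intro i j
      simp only [M, Matrix.add_apply, Matrix.smul_apply, smul_eq_mul]
      fun_prop
    have hinv : ContinuousAt Inv.inv (M αstar) := by
      apply continuousAt_matrix_inv
      rw [Ring.inverse_eq_inv']
      exact continuousAt_inv₀ (hMunit _ hα.le).ne_zero
    exact hinv.comp hMc.continuousAt
  have hgcont : ContinuousAt g αstar := by
    have hc : Continuous (fun X : Matrix (Fin m) (Fin m) ℝ =>
        rbar ⬝ᵥ ((X * B * (M αstar)⁻¹) *ᵥ rbar)) :=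
      continuous_const.dotProduct
        (((continuous_id.matrix_mul continuous_const).matrix_mul
          continuous_const).matrix_mulVec continuous_const)
    exact hc.continuousAt.comp hMcont
  -- derivative of f at αstar
  have hfderiv : HasDerivAt f (-(g αstar)) αstar := by
    rw [hasDerivAt_iff_tendsto_slope]
    have hev : (fun α => -(g α)) =ᶠ[𝓝[≠] αstar] slope f αstar := by
      have hmem : {α : ℝ | 0 < α} ∈ 𝓝[≠] αstar :=
        nhdsWithin_le_nhds (isOpen_lt continuous_const continuous_id |>.mem_nhds hα)
      filter_upwards [hmem, self_mem_nhdsWithin] with α hα' hne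
      have hthis : f α - f αstar = (αstar - α) * g α := hres α hα'.le
      have hne' : α - αstar ≠ 0 := sub_ne_zero.mpr hne
      rw [slope_def_field, eq_div_iff hne']
      linear_combination -hthis
    refine Tendsto.congr' hev ?_
    exact (hgcont.neg).tendsto.comp (nhdsWithin_le_nhds)
  -- derivative of S at αstar
  have hSderiv : HasDerivAt S ((1/4) * (2 * f αstar * (-(g αstar))) + δ * (2 * (αstar - 1))) αstar := by
    have h1 : HasDerivAt (fun α => (1/4 : ℝ) * (f α) ^ 2)
        ((1/4) * (2 * f αstar * (-(g αstar)))) αstar := by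
      have := (hfderiv.fun_pow 2).const_mul (1/4 : ℝ)
      refine this.congr_deriv ?_
      ring
    have h2 : HasDerivAt (fun α : ℝ => δ * (α - 1) ^ 2) (δ * (2 * (αstar - 1))) αstar := by
      have := (((hasDerivAt_id αstar).sub_const 1).fun_pow 2).const_mul δ
      refine this.congr_deriv ?_
      simp only [id_eq]
      push_cast
      ring
    exact h1.add h2
  have heq : (1/4) * (2 * f αstar * (-(g αstar))) + δ * (2 * (αstar - 1)) = 0 :=
    hSderiv.unique hS
  -- conclude
  have hg' : g αstar = rbar ⬝ᵥ ((M αstar)⁻¹ *ᵥ (B *ᵥ ((M αstar)⁻¹ *ᵥ rbar))) := by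
    simp only [hg, Matrix.mulVec_mulVec, Matrix.mul_assoc]
  have h4δ : (4 : ℝ) * δ ≠ 0 := by positivity
  have hkey : αstar = 1 + f αstar * g αstar / (4 * δ) := by
    field_simp
    nlinarith [heq]
  rw [← hg']
  exact hkey
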